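/- For every integer n ≥ 2, the ℚ-vector space of tuples (a_1,…,a_m) ∈ ℚ^m (m = ⌊n/2⌋) satisfying only Σ_{j=1}^m a_j sin(jπ/n) = 0 has dimension m − φ(2n)/2, where φ is Euler's totient function. -/

import Mathlib

/-- The `ℚ`-linear map sending `(a_1,…,a_m)` (with `m = ⌊n/2⌋`) to
`∑_{j=1}^m a_j • sin (jπ/n) : ℝ`. -/
noncomputable def sinSum (n : ℕ) : (Fin (n / 2) → ℚ) →ₗ[ℚ] ℝ :=
  ∑ j : Fin (n / 2),
    (LinearMap.proj j : (Fin (n / 2) → ℚ) →ₗ[ℚ] ℚ).smulRight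
      (Real.sin ((j.1 + 1) * Real.pi / n))

noncomputable section

open Complex Submodule

noncomputable section

namespace SinAux

variable (n : ℕ)

def zeta : ℂ := Complex.exp (Real.pi * Complex.I / n)

def cc (k : ℤ) : ℂ := zeta n ^ k + zeta n ^ (-k)

def ss (k : ℤ) : ℂ := zeta n ^ k - zeta n ^ (-k)

def P : Submodule ℚ ℂ := span ℚ (Set.range fun k : Fin (2 * n) => zeta n ^ (k : ℕ))

def Ep : Submodule ℚ ℂ := span ℚ (Set.range fun k : Fin (2 * n) => cc n (k : ℕ))

def Sm : Submodule ℚ ℂ := span ℚ (Set.range fun j : Fin (n / 2) => ss n ((j : ℕ) + 1))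

variable {n}

lemma zeta_ne_zero : zeta n ≠ 0 := Complex.exp_ne_zero _

lemma zeta_prim (hn : 2 ≤ n) : IsPrimitiveRoot (zeta n) (2 * n) := by
  have h := Complex.isPrimitiveRoot_exp (2 * n) (by omega)
  have hn0 : (n : ℂ) ≠ 0 := Nat.cast_ne_zero.mpr (by omega)
  have : zeta n = Complex.exp (2 * ↑Real.pi * Complex.I / ((2 * n : ℕ) : ℂ)) := by
    rw [zeta]; congr 1; push_cast; field_simp
  rw [this]; exact h

lemma exp_int_mul' (m : ℤ) : Complex.exp (m * (Real.pi * Complex.I / n)) = zeta n ^ m := by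
  rw [Complex.exp_int_mul, zeta]

lemma zeta_pow_n (hn : 2 ≤ n) : zeta n ^ (n : ℤ) = -1 := by
  rw [← exp_int_mul']
  have hn0 : (n : ℂ) ≠ 0 := Nat.cast_ne_zero.mpr (by omega)
  rw [show ((n:ℤ):ℂ) * (Real.pi * Complex.I / n) = Real.pi * Complex.I by push_cast; field_simp]
  exact Complex.exp_pi_mul_I

lemma zeta_pow_two_n (hn : 2 ≤ n) : zeta n ^ ((2 * n : ℕ) : ℤ) = 1 := by
  have := (zeta_prim hn).pow_eq_one
  rwa [← zpow_natCast] at this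

lemma conj_zeta_zpow (k : ℤ) : (starRingEnd ℂ) (zeta n ^ k) = zeta n ^ (-k) := by
  have habs : ‖zeta n‖ = 1 := by
    have : zeta n = Complex.exp ((↑(Real.pi / n) : ℂ) * Complex.I) := by
      rw [zeta]; congr 1; push_cast; ring
    rw [this]; exact Complex.norm_exp_ofReal_mul_I _
  rw [map_zpow₀, ← Complex.inv_eq_conj habs, inv_zpow, zpow_neg]

lemma zpow_shift (hn : 2 ≤ n) (k q : ℤ) : zeta n ^ (k + 2 * n * q) = zeta n ^ k := by
  rw [zpow_add₀ zeta_ne_zero, zpow_mul, show ((2:ℤ) * n) = ((2 * n : ℕ) : ℤ) by push_cast; ring,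
    zeta_pow_two_n hn, one_zpow, mul_one]

lemma ss_neg (k : ℤ) : ss n (-k) = -ss n k := by simp only [ss, neg_neg]; ring

lemma ss_shift (hn : 2 ≤ n) (k q : ℤ) : ss n (k + 2 * n * q) = ss n k := by
  rw [ss, ss, zpow_shift hn, show -(k + 2*n*q) = -k + 2*n*(-q) by ring, zpow_shift hn]

lemma cc_shift (hn : 2 ≤ n) (k q : ℤ) : cc n (k + 2 * n * q) = cc n k := by
  rw [cc, cc, zpow_shift hn, show -(k + 2*n*q) = -k + 2*n*(-q) by ring, zpow_shift hn]

lemma zeta_pow_neg_n (hn : 2 ≤ n) : zeta n ^ (-(n : ℤ)) = -1 := by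
  rw [zpow_neg, zeta_pow_n hn]; norm_num

lemma ss_flip (hn : 2 ≤ n) (k : ℤ) : ss n ((n : ℤ) - k) = ss n k := by
  rw [ss, ss, show -((n:ℤ) - k) = k + (-(n:ℤ)) by ring, show ((n:ℤ) - k) = (-k) + (n:ℤ) by ring,
    zpow_add₀ zeta_ne_zero, zpow_add₀ zeta_ne_zero, zeta_pow_n hn, zeta_pow_neg_n hn]
  ring

lemma mem_P (hn : 2 ≤ n) (k : ℤ) : zeta n ^ k ∈ P n := by
  have h2n : (0:ℤ) < 2 * n := by positivity
  have hk : k = k % (2*n) + 2*n * (k / (2*n)) := by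
    rw [mul_comm (2*(n:ℤ))]; linarith [Int.emod_add_ediv_mul k (2*n)]
  rw [hk, zpow_shift hn]
  have h0 : 0 ≤ k % (2*n) := Int.emod_nonneg k (by omega)
  have h1 : k % (2*n) < 2*n := Int.emod_lt_of_pos k h2n
  refine subset_span ⟨⟨(k % (2*n)).toNat, by omega⟩, ?_⟩
  simp only []
  rw [← zpow_natCast]
  congr 1
  omega

lemma mem_Ep (hn : 2 ≤ n) (k : ℤ) : cc n k ∈ Ep n := by
  have h2n : (0:ℤ) < 2 * n := by positivity
  have hk : k = k % (2*n) + 2*n * (k / (2*n)) := by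
    rw [mul_comm (2*(n:ℤ))]; linarith [Int.emod_add_ediv_mul k (2*n)]
  rw [hk, cc_shift hn]
  have h0 : 0 ≤ k % (2*n) := Int.emod_nonneg k (by omega)
  have h1 : k % (2*n) < 2*n := Int.emod_lt_of_pos k h2n
  refine subset_span ⟨⟨(k % (2*n)).toNat, by omega⟩, ?_⟩
  simp only []
  congr 1
  omega

lemma mem_Sm (hn : 2 ≤ n) (k : ℤ) : ss n k ∈ Sm n := by
  -- step A : 0 ≤ k ≤ n/2
  have A : ∀ k : ℤ, 0 ≤ k → k ≤ (n/2 : ℕ) → ss n k ∈ Sm n := by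
    intro k h0 h1
    rcases eq_or_lt_of_le h0 with h | h
    · rw [← h]; simp [ss]
    · refine subset_span ⟨⟨k.toNat - 1, by omega⟩, ?_⟩
      simp only []
      congr 1
      omega
  -- step B : 0 ≤ k ≤ n
  have B : ∀ k : ℤ, 0 ≤ k → k ≤ n → ss n k ∈ Sm n := by
    intro k h0 h1
    by_cases h : k ≤ (n/2 : ℕ)
    · exact A k h0 h
    · rw [← ss_flip hn]
      exact A _ (by omega) (by omega)
  -- step C : 0 ≤ k ≤ 2n
  have C : ∀ k : ℤ, 0 ≤ k → k ≤ 2*n → ss n k ∈ Sm n := by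
    intro k h0 h1
    by_cases h : k ≤ n
    · exact B k h0 h
    · have : ss n k = -ss n (2*n - k) := by
        rw [show (2*(n:ℤ) - k) = -k + 2*n*1 by ring, ss_shift hn, ss_neg, neg_neg]
      rw [this]
      exact neg_mem (B _ (by omega) (by omega))
  have h2n : (0:ℤ) < 2 * n := by positivity
  have hk : k = k % (2*n) + 2*n * (k / (2*n)) := by
    rw [mul_comm (2*(n:ℤ))]; linarith [Int.emod_add_ediv_mul k (2*n)]
  rw [hk, ss_shift hn]
  exact C _ (Int.emod_nonneg k (by omega)) (le_of_lt (Int.emod_lt_of_pos k h2n))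

/-- complex conjugation as a `ℚ`-linear map -/
def Cm : ℂ →ₗ[ℚ] ℂ := Complex.conjAe.toLinearMap.restrictScalars ℚ

lemma Cm_apply (z : ℂ) : Cm z = (starRingEnd ℂ) z := rfl

lemma Ep_fixed {x : ℂ} (hx : x ∈ Ep n) : Cm x = x := by
  have : Ep n ≤ LinearMap.ker (Cm - LinearMap.id) := by
    rw [Ep, span_le]
    rintro - ⟨k, rfl⟩
    simp only [SetLike.mem_coe, LinearMap.mem_ker, LinearMap.sub_apply, LinearMap.id_apply,
      sub_eq_zero, Cm_apply, cc, map_add, conj_zeta_zpow, neg_neg]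
    ring
  have := this hx
  simpa [sub_eq_zero] using this

lemma Sm_neg {x : ℂ} (hx : x ∈ Sm n) : Cm x = -x := by
  have : Sm n ≤ LinearMap.ker (Cm + LinearMap.id) := by
    rw [Sm, span_le]
    rintro - ⟨j, rfl⟩
    simp only [SetLike.mem_coe, LinearMap.mem_ker, LinearMap.add_apply, LinearMap.id_apply,
      Cm_apply, ss, map_sub, conj_zeta_zpow, neg_neg]
    ring
  have := this hx
  rw [LinearMap.mem_ker, LinearMap.add_apply, LinearMap.id_apply] at this
  linear_combination (norm := module) this

lemma Ep_inf_Sm : Ep n ⊓ Sm n = ⊥ := by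
  rw [eq_bot_iff]
  rintro x ⟨hx1, hx2⟩
  have h1 := Ep_fixed hx1
  have h2 := Sm_neg hx2
  have hx : x = -x := h1.symm.trans h2
  have hx0 : x = 0 := by
    have h2x : (2 : ℂ) * x = 0 := by linear_combination hx
    simpa using h2x
  simp [hx0]

def W : ℂ →ₗ[ℚ] ℂ := LinearMap.mulLeft ℚ (ss n 1)

lemma W_injective (hn : 2 ≤ n) : Function.Injective (W (n := n)) := by
  have hw : ss n 1 ≠ 0 := by
    intro h
    rw [ss, zpow_one, zpow_neg, zpow_one, sub_eq_zero] at h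
    have h2 : zeta n ^ (2:ℕ) = 1 := by
      rw [pow_two]
      nth_rewrite 1 [h]
      exact inv_mul_cancel₀ zeta_ne_zero
    exact (zeta_prim hn).pow_ne_one_of_pos_of_lt (by norm_num) (by omega) h2
  intro a b hab
  simp only [W, LinearMap.mulLeft_apply] at hab
  exact mul_left_cancel₀ hw hab

lemma zpow_decomp (k : ℤ) :
    zeta n ^ (k + 1) = zeta n ^ k * zeta n ∧
    zeta n ^ (-(k + 1)) = zeta n ^ (-k) * (zeta n)⁻¹ ∧
    zeta n ^ (k - 1) = zeta n ^ k * (zeta n)⁻¹ ∧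
    zeta n ^ (-(k - 1)) = zeta n ^ (-k) * zeta n := by
  have hz := zeta_ne_zero (n := n)
  refine ⟨by rw [zpow_add₀ hz, zpow_one], ?_, ?_, ?_⟩
  · rw [show -(k+1) = -k + (-1) by ring, zpow_add₀ hz, zpow_neg_one]
  · rw [show k - 1 = k + (-1) by ring, zpow_add₀ hz, zpow_neg_one]
  · rw [show -(k-1) = -k + 1 by ring, zpow_add₀ hz, zpow_one]

lemma w_mul_cc (hn : 2 ≤ n) (k : ℤ) : ss n 1 * cc n k = ss n (k + 1) - ss n (k - 1) := by
  obtain ⟨e1, e2, e3, e4⟩ := zpow_decomp (n := n) k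
  simp only [ss, cc, e1, e2, e3, e4, zpow_one, zpow_neg, zpow_one]
  ring

lemma w_mul_ss (hn : 2 ≤ n) (k : ℤ) : ss n 1 * ss n k = cc n (k + 1) - cc n (k - 1) := by
  obtain ⟨e1, e2, e3, e4⟩ := zpow_decomp (n := n) k
  simp only [ss, cc, e1, e2, e3, e4, zpow_one, zpow_neg, zpow_one]
  ring

lemma map_W_Ep (hn : 2 ≤ n) : (Ep n).map (W (n := n)) ≤ Sm n := by
  rw [Ep, Submodule.map_span, span_le]
  rintro - ⟨-, ⟨k, rfl⟩, rfl⟩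
  simp only [W, LinearMap.mulLeft_apply, SetLike.mem_coe]
  rw [w_mul_cc hn]
  exact sub_mem (mem_Sm hn _) (mem_Sm hn _)

lemma map_W_Sm (hn : 2 ≤ n) : (Sm n).map (W (n := n)) ≤ Ep n := by
  rw [Sm, Submodule.map_span, span_le]
  rintro - ⟨-, ⟨j, rfl⟩, rfl⟩
  simp only [W, LinearMap.mulLeft_apply, SetLike.mem_coe]
  rw [w_mul_ss hn]
  exact sub_mem (mem_Ep hn _) (mem_Ep hn _)

lemma Ep_sup_Sm (hn : 2 ≤ n) : Ep n ⊔ Sm n = P n := by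
  apply le_antisymm
  · apply sup_le
    · rw [Ep, span_le]
      rintro - ⟨k, rfl⟩
      exact add_mem (mem_P hn _) (mem_P hn _)
    · rw [Sm, span_le]
      rintro - ⟨j, rfl⟩
      exact sub_mem (mem_P hn _) (mem_P hn _)
  · rw [P, span_le]
    rintro - ⟨k, rfl⟩
    have h1 : cc n (k : ℕ) ∈ Ep n ⊔ Sm n := Submodule.mem_sup_left (mem_Ep hn _)
    have h2 : ss n (k : ℕ) ∈ Ep n ⊔ Sm n := Submodule.mem_sup_right (mem_Sm hn _)
    have h : zeta n ^ ((k : ℕ) : ℤ) = (2⁻¹ : ℚ) • (cc n (k : ℕ) + ss n (k : ℕ)) := by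
      rw [cc, ss, Rat.smul_def]
      push_cast
      ring
    have hmem := smul_mem _ (2⁻¹ : ℚ) (add_mem h1 h2)
    rw [← h, zpow_natCast] at hmem
    exact hmem

lemma P_eq_adjoin (hn : 2 ≤ n) :
    P n = Subalgebra.toSubmodule (Algebra.adjoin ℚ {zeta n}) := by
  apply le_antisymm
  · rw [P, span_le]
    rintro - ⟨k, rfl⟩
    simp only [SetLike.mem_coe, Subalgebra.mem_toSubmodule]
    exact pow_mem (Algebra.self_mem_adjoin_singleton ℚ _) _
  · rw [Algebra.adjoin_eq_span, span_le]
    intro x hx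
    rw [SetLike.mem_coe, Submonoid.mem_closure_singleton] at hx
    obtain ⟨m, rfl⟩ := hx
    have := mem_P hn (m : ℤ)
    rwa [zpow_natCast] at this

lemma finrank_P (hn : 2 ≤ n) : Module.finrank ℚ (P n) = Nat.totient (2 * n) := by
  rw [P_eq_adjoin hn]
  have hint : IsIntegral ℚ (zeta n) := ((zeta_prim hn).isIntegral (by omega)).tower_top
  have h1 : Module.finrank ℚ (Algebra.adjoin ℚ {zeta n}) = (minpoly ℚ (zeta n)).natDegree := by
    rw [(Algebra.adjoin.powerBasis hint).finrank, Algebra.adjoin.powerBasis_dim]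
  have h2 : minpoly ℚ (zeta n) = Polynomial.cyclotomic (2 * n) ℚ :=
    (Polynomial.cyclotomic_eq_minpoly_rat (zeta_prim hn) (by omega)).symm
  have : Module.finrank ℚ (Subalgebra.toSubmodule (Algebra.adjoin ℚ {zeta n}))
      = Module.finrank ℚ (Algebra.adjoin ℚ {zeta n}) := rfl
  rw [this, h1, h2, Polynomial.natDegree_cyclotomic]

instance : FiniteDimensional ℚ (Ep n) := FiniteDimensional.span_of_finite ℚ (Set.finite_range _)
instance : FiniteDimensional ℚ (Sm n) := FiniteDimensional.span_of_finite ℚ (Set.finite_range _)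
instance : FiniteDimensional ℚ (P n) := FiniteDimensional.span_of_finite ℚ (Set.finite_range _)

lemma finrank_Ep_eq_Sm (hn : 2 ≤ n) : Module.finrank ℚ (Ep n) = Module.finrank ℚ (Sm n) := by
  have hW := W_injective (n := n) hn
  have h1 : Module.finrank ℚ (Ep n) = Module.finrank ℚ ((Ep n).map (W (n := n))) :=
    LinearEquiv.finrank_eq (Submodule.equivMapOfInjective _ hW _)
  have h2 : Module.finrank ℚ (Sm n) = Module.finrank ℚ ((Sm n).map (W (n := n))) :=
    LinearEquiv.finrank_eq (Submodule.equivMapOfInjective _ hW _)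
  have le1 : Module.finrank ℚ ((Ep n).map (W (n := n))) ≤ Module.finrank ℚ (Sm n) :=
    Submodule.finrank_mono (map_W_Ep hn)
  have le2 : Module.finrank ℚ ((Sm n).map (W (n := n))) ≤ Module.finrank ℚ (Ep n) :=
    Submodule.finrank_mono (map_W_Sm hn)
  omega

lemma two_mul_finrank_Sm (hn : 2 ≤ n) :
    2 * Module.finrank ℚ (Sm n) = Nat.totient (2 * n) := by
  have h := Submodule.finrank_sup_add_finrank_inf_eq (Ep n) (Sm n)
  rw [Ep_sup_Sm hn, Ep_inf_Sm, finrank_bot, finrank_P hn, finrank_Ep_eq_Sm hn] at h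
  omega

/-- `x ↦ 2 i x` as a `ℚ`-linear map `ℝ → ℂ`. -/
def Lm : ℝ →ₗ[ℚ] ℂ :=
  (LinearMap.mulLeft ℚ (2 * Complex.I)).comp (LinearMap.restrictScalars ℚ Complex.ofRealAm.toLinearMap)

lemma Lm_apply (x : ℝ) : Lm x = 2 * Complex.I * x := rfl

lemma Lm_injective : Function.Injective Lm := by
  intro a b hab
  rw [Lm_apply, Lm_apply] at hab
  have h2I : (2 * Complex.I) ≠ 0 := by simp [Complex.I_ne_zero]
  have := mul_left_cancel₀ h2I hab
  exact_mod_cast this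

lemma Lm_sin (hn : 2 ≤ n) (j : ℕ) :
    Lm (Real.sin ((j + 1) * Real.pi / n)) = ss n ((j : ℤ) + 1) := by
  rw [Lm_apply, ss, ← exp_int_mul', ← exp_int_mul']
  rw [Complex.ofReal_sin, Complex.sin]
  push_cast
  have hI := Complex.I_sq
  have : Complex.exp (-((↑j + 1) * ↑Real.pi / ↑n) * Complex.I)
      = Complex.exp (-(↑j + 1) * (↑Real.pi * Complex.I / ↑n)) := by
    congr 1; ring
  rw [this]
  have : Complex.exp (((↑j + 1) : ℂ) * ↑Real.pi / ↑n * Complex.I)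
      = Complex.exp ((↑j + 1) * (↑Real.pi * Complex.I / ↑n)) := by
    congr 1; ring
  rw [this]
  ring_nf
  rw [Complex.I_sq]
  ring


lemma sinSum_apply (n : ℕ) (a : Fin (n / 2) → ℚ) :
    sinSum n a = ∑ j : Fin (n / 2), a j • Real.sin ((j.1 + 1) * Real.pi / n) := by
  simp [sinSum, LinearMap.sum_apply, LinearMap.smulRight_apply, LinearMap.proj_apply]

lemma range_sinSum (n : ℕ) :
    LinearMap.range (sinSum n)
      = span ℚ (Set.range fun j : Fin (n / 2) => Real.sin ((j.1 + 1) * Real.pi / n)) := by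
  apply le_antisymm
  · rintro - ⟨a, rfl⟩
    rw [sinSum_apply]
    exact sum_mem fun j _ => smul_mem _ _ (subset_span ⟨j, rfl⟩)
  · rw [span_le]
    rintro - ⟨j, rfl⟩
    refine ⟨Pi.single j 1, ?_⟩
    rw [sinSum_apply]
    rw [Finset.sum_eq_single j]
    · simp
    · intro i _ hij
      simp [Pi.single_apply, hij]
    · simp
  done

lemma map_Lm_range (n : ℕ) (hn : 2 ≤ n) :
    (LinearMap.range (sinSum n)).map Lm = Sm n := by
  have h : (Lm ∘ fun j : Fin (n / 2) => Real.sin ((j.1 + 1) * Real.pi / n))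
      = fun j : Fin (n / 2) => ss n ((j.1 : ℤ) + 1) := by
    funext j
    exact Lm_sin hn j.1
  rw [range_sinSum, Submodule.map_span, ← Set.range_comp, h, Sm]

end SinAux

end

open SinAux

/-- The `ℚ`-vector space of tuples `(a_1,…,a_m) ∈ ℚ^m` (`m = ⌊n/2⌋`) with
`∑_{j=1}^m a_j sin (jπ/n) = 0` has dimension `m - φ(2n)/2`. -/
theorem sin_relation_space_dimension (n : ℕ) (hn : 2 ≤ n) :
    Module.finrank ℚ ↥(LinearMap.ker (sinSum n)) =
      n / 2 - Nat.totient (2 * n) / 2 := by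
  have hrn := LinearMap.finrank_range_add_finrank_ker (sinSum n)
  rw [Module.finrank_fin_fun] at hrn
  have hr : Module.finrank ℚ (LinearMap.range (sinSum n)) = Module.finrank ℚ (Sm n) := by
    rw [← map_Lm_range n hn]
    exact LinearEquiv.finrank_eq (Submodule.equivMapOfInjective _ Lm_injective _)
  have htot := two_mul_finrank_Sm (n := n) hn
  omega
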